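/- If (X,f) has eventual shadowing, then the induced system (F_2(X), f_2) on the 2-fold symmetric product has eventual shadowing. -/

import Mathlib

open Filter Topology TopologicalSpace Metric EMetric

def hyperMap {X : Type*} [MetricSpace X] (f : X → X) (hf : Continuous f) :
    NonemptyCompacts X → NonemptyCompacts X :=
  fun A => ⟨⟨f '' A, A.isCompact.image hf⟩, A.nonempty.image f⟩

def IsF2 {X : Type*} [MetricSpace X] (A : NonemptyCompacts X) : Prop :=
  ∃ a b : X, (A : Set X) = {a, b}

lemma hyperMap_iterate_coe {X : Type*} [MetricSpace X] (f : X → X) (hf : Continuous f)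
    (B : NonemptyCompacts X) (i : ℕ) :
    ((hyperMap f hf)^[i] B : Set X) = f^[i] '' B := by
  induction i with
  | zero => simp
  | succ n ih =>
      rw [Function.iterate_succ_apply']
      show f '' ((hyperMap f hf)^[n] B : Set X) = _
      rw [ih, ← Set.image_comp, ← Function.iterate_succ']

/-- eventual shadowing of (X, f) implies eventual shadowing of the induced
system on the 2-fold symmetric product F₂(X). -/
theorem eventualShadowing_F2_of_eventualShadowing
    {X : Type*} [MetricSpace X] [CompactSpace X]
    (f : X → X) (hf : Continuous f)
    (hsh : ∀ ε > (0:ℝ), ∃ δ > (0:ℝ), ∀ x : ℕ → X,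
      (∀ i, dist (f (x i)) (x (i + 1)) < δ) →
      ∃ z : X, ∃ N : ℕ, ∀ i ≥ N, dist (f^[i] z) (x i) < ε) :
    ∀ ε > (0:ℝ), ∃ δ > (0:ℝ), ∀ A : ℕ → NonemptyCompacts X,
      (∀ i, IsF2 (A i)) →
      (∀ i, dist (hyperMap f hf (A i)) (A (i + 1)) < δ) →
      ∃ B : NonemptyCompacts X, IsF2 B ∧
        ∃ N : ℕ, ∀ i ≥ N, dist ((hyperMap f hf)^[i] B) (A i) < ε := by
  intro ε hε
  obtain ⟨δ, hδ, hδsh⟩ := hsh ε hε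
  refine ⟨δ, hδ, ?_⟩
  intro A hF2 hpo
  -- key step lemma
  have fin : ∀ i, hausdorffEdist (f '' (A i : Set X)) (A (i+1) : Set X) ≠ ⊤ := fun i =>
    hausdorffEdist_ne_top_of_nonempty_of_bounded ((A i).nonempty.image f) (A (i+1)).nonempty
      (((A i).isCompact.image hf).isBounded) ((A (i+1)).isCompact.isBounded)
  have hpo' : ∀ i, hausdorffDist (f '' (A i : Set X)) (A (i+1) : Set X) < δ := fun i => hpo i
  have key : ∀ (n : ℕ) (p : X × X), ({p.1, p.2} : Set X) = (A n : Set X) →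
      ∃ q : X × X, ({q.1, q.2} : Set X) = (A (n+1) : Set X) ∧
        dist (f p.1) q.1 < δ ∧ dist (f p.2) q.2 < δ := by
    intro n p hp
    obtain ⟨a, b, hab⟩ := hF2 (n+1)
    have hmem : ∀ u ∈ ({p.1, p.2} : Set X), f u ∈ f '' (A n : Set X) := by
      intro u hu; exact ⟨u, hp ▸ hu, rfl⟩
    have hx := exists_dist_lt_of_hausdorffDist_lt (hmem p.1 (by simp)) (hpo' n) (fin n)
    have hy := exists_dist_lt_of_hausdorffDist_lt (hmem p.2 (by simp)) (hpo' n) (fin n)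
    have hpa := exists_dist_lt_of_hausdorffDist_lt' (show a ∈ (A (n+1) : Set X) by rw [hab]; simp)
      (hpo' n) (fin n)
    have hpb := exists_dist_lt_of_hausdorffDist_lt' (show b ∈ (A (n+1) : Set X) by rw [hab]; simp)
      (hpo' n) (fin n)
    rw [hab] at hx hy
    -- turn into disjunctions
    obtain ⟨u, hu, hud⟩ := hx
    obtain ⟨v, hv, hvd⟩ := hy
    obtain ⟨s, hs, hsd⟩ := hpa
    obtain ⟨t, ht, htd⟩ := hpb
    rw [← hp] at hs ht
    obtain ⟨s', hs', rfl⟩ := hs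
    obtain ⟨t', ht', rfl⟩ := ht
    simp only [Set.mem_insert_iff, Set.mem_singleton_iff] at hu hv hs' ht'
    rw [hab]
    have H1 : dist (f p.1) a < δ ∨ dist (f p.1) b < δ := by
      rcases hu with rfl | rfl; exacts [Or.inl hud, Or.inr hud]
    have H2 : dist (f p.2) a < δ ∨ dist (f p.2) b < δ := by
      rcases hv with rfl | rfl; exacts [Or.inl hvd, Or.inr hvd]
    have H3 : dist (f p.1) a < δ ∨ dist (f p.2) a < δ := by
      rcases hs' with rfl | rfl; exacts [Or.inl hsd, Or.inr hsd]
    have H4 : dist (f p.1) b < δ ∨ dist (f p.2) b < δ := by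
      rcases ht' with rfl | rfl; exacts [Or.inl htd, Or.inr htd]
    rcases H1 with H1 | H1 <;> rcases H2 with H2 | H2 <;>
      rcases H3 with H3 | H3 <;> rcases H4 with H4 | H4 <;>
      first
        | exact ⟨(a, b), rfl, by assumption, by assumption⟩
        | exact ⟨(b, a), Set.pair_comm b a, by assumption, by assumption⟩
  -- build the pair of pseudo-orbits
  obtain ⟨a0, b0, hab0⟩ := hF2 0
  let c : ∀ n, {p : X × X // ({p.1, p.2} : Set X) = (A n : Set X)} := fun n =>
    Nat.rec ⟨(a0, b0), hab0.symm⟩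
      (fun n pn => ⟨(key n pn.1 pn.2).choose, (key n pn.1 pn.2).choose_spec.1⟩) n
  have hstep : ∀ n, dist (f (c n).1.1) (c (n+1)).1.1 < δ ∧ dist (f (c n).1.2) (c (n+1)).1.2 < δ :=
    fun n => (key n (c n).1 (c n).2).choose_spec.2
  set x : ℕ → X := fun n => (c n).1.1 with hxdef
  set y : ℕ → X := fun n => (c n).1.2 with hydef
  obtain ⟨z, N1, hz⟩ := hδsh x (fun i => (hstep i).1)
  obtain ⟨w, N2, hw⟩ := hδsh y (fun i => (hstep i).2)
  refine ⟨⟨⟨{z, w}, ((Set.finite_singleton w).insert z).isCompact⟩,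
    ⟨z, by simp⟩⟩, ⟨z, w, rfl⟩, max N1 N2, ?_⟩
  intro i hi
  have hiz := hz i (le_trans (le_max_left _ _) hi)
  have hiw := hw i (le_trans (le_max_right _ _) hi)
  rw [NonemptyCompacts.dist_eq, hyperMap_iterate_coe]
  have himg : (f^[i] '' ({z, w} : Set X)) = {f^[i] z, f^[i] w} := Set.image_pair _ _ _
  show hausdorffDist (f^[i] '' (({z, w} : Set X))) (A i : Set X) < ε
  rw [himg, ← (c i).2]
  have hr : (0:ℝ) ≤ max (dist (f^[i] z) (x i)) (dist (f^[i] w) (y i)) :=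
    le_max_of_le_left dist_nonneg
  refine lt_of_le_of_lt (hausdorffDist_le_of_mem_dist hr ?_ ?_) (max_lt hiz hiw)
  · rintro u (rfl | rfl)
    · exact ⟨x i, by simp [(c i).2 ▸ (by simp : x i ∈ ({x i, y i} : Set X)), hxdef], le_max_left _ _⟩
    · exact ⟨y i, by simp [hydef], le_max_right _ _⟩
  · rintro u (rfl | rfl)
    · exact ⟨f^[i] z, by simp, by rw [dist_comm]; exact le_max_left _ _⟩
    · exact ⟨f^[i] w, by simp, by rw [dist_comm]; exact le_max_right _ _⟩
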